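/- arXiv:2111.01487 — 2 statements merged into one kernel-verified Lean document; each statement's English description precedes it below -/
import Mathlib

section
/- Let λ > -1/2 and n ≥ 1 be an integer with Ω_n := √(n² + 2λn). Then the real 2×2 matrix S_n = (1/√((n+Ω_n)(n+2λ+Ω_n))) · [[n+λ+Ω_n, -λ], [-λ, n+λ+Ω_n]] is symmetric, symplectic (i.e., S_nᵀ J S_n = J with J = [[0,1],[-1,0]]), has determinant 1, and satisfies S_n⁻¹ A_n S_n = diag(Ω_n, -Ω_n), where A_n = [[n+λ, λ], [-λ, -n-λ]]. -/
open Matrix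

/-- the matrix `S_n` diagonalizing the linearization of the logarithmic NLS
around a plane wave is symmetric, symplectic, has determinant 1, and
`S_n⁻¹ A_n S_n = diag(Ω_n, -Ω_n)` with `Ω_n = √(n² + 2λn)`. -/
theorem Sn_symplectic_diagonalizes (lam : ℝ) (hlam : -(1:ℝ)/2 < lam) (n : ℕ) (hn : 1 ≤ n) :
    ∀ Ω : ℝ, Ω = Real.sqrt ((n : ℝ)^2 + 2 * lam * n) →
    ∀ S A J : Matrix (Fin 2) (Fin 2) ℝ,
      S = (1 / Real.sqrt (((n : ℝ) + Ω) * ((n : ℝ) + 2 * lam + Ω))) •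
            !![(n : ℝ) + lam + Ω, -lam; -lam, (n : ℝ) + lam + Ω] →
      A = !![(n : ℝ) + lam, lam; -lam, -(n : ℝ) - lam] →
      J = !![0, 1; -1, 0] →
      S.transpose = S ∧
      S.transpose * J * S = J ∧
      S.det = 1 ∧
      S⁻¹ * A * S = !![Ω, 0; 0, -Ω] := by
  intro Ω hΩdef S A J hS hA hJ
  have hn1 : (1:ℝ) ≤ (n:ℝ) := by exact_mod_cast hn
  have hpos : (0:ℝ) < (n : ℝ)^2 + 2 * lam * n := by nlinarith
  have hΩ2 : Ω^2 = (n : ℝ)^2 + 2 * lam * n := by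
    rw [hΩdef]; exact Real.sq_sqrt hpos.le
  have hΩpos : 0 < Ω := hΩdef ▸ Real.sqrt_pos.mpr hpos
  have hPpos : 0 < ((n : ℝ) + Ω) * ((n : ℝ) + 2 * lam + Ω) := by nlinarith
  set c : ℝ := 1 / Real.sqrt (((n : ℝ) + Ω) * ((n : ℝ) + 2 * lam + Ω)) with hcdef
  have hsq : Real.sqrt (((n : ℝ) + Ω) * ((n : ℝ) + 2 * lam + Ω)) ^ 2
      = ((n : ℝ) + Ω) * ((n : ℝ) + 2 * lam + Ω) := Real.sq_sqrt hPpos.le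
  have hspos : 0 < Real.sqrt (((n : ℝ) + Ω) * ((n : ℝ) + 2 * lam + Ω)) :=
    Real.sqrt_pos.mpr hPpos
  have hc2 : c^2 * (((n : ℝ) + Ω) * ((n : ℝ) + 2 * lam + Ω)) = 1 := by
    rw [hcdef, div_pow, one_pow, hsq]
    exact one_div_mul_cancel hPpos.ne'
  have hsym : S.transpose = S := by
    rw [hS]
    ext i j
    fin_cases i <;> fin_cases j <;> simp [Matrix.transpose_apply]
  have hdet : S.det = 1 := by
    rw [hS, Matrix.det_smul, Matrix.det_fin_two_of]
    simp only [Fintype.card_fin]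
    linear_combination hc2
  have hsymp : S.transpose * J * S = J := by
    rw [hsym, hS, hJ]
    ext i j
    fin_cases i <;> fin_cases j <;>
      · simp [Matrix.mul_apply, Fin.sum_univ_two]
        first
        | linear_combination
        | linear_combination hc2
        | linear_combination -hc2
        | linear_combination c^2 * hΩ2
        | linear_combination -(c^2 * hΩ2)
        | linear_combination hc2 + c^2 * hΩ2
        | linear_combination -(hc2 + c^2 * hΩ2)
        | linear_combination hc2 - c^2 * hΩ2
        | linear_combination -(hc2 - c^2 * hΩ2)
        | linear_combination 2*hc2 + c^2 * hΩ2
        | linear_combination -(2*hc2 + c^2 * hΩ2)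
        | linear_combination 2*hc2 - c^2 * hΩ2
        | linear_combination -(2*hc2 - c^2 * hΩ2)
  have hAS : A * S = S * !![Ω, 0; 0, -Ω] := by
    rw [hS, hA]
    ext i j
    fin_cases i <;> fin_cases j <;>
      · simp [Matrix.mul_apply, Fin.sum_univ_two]
        first
        | linear_combination
        | linear_combination c * hΩ2
        | linear_combination (-c) * hΩ2
  have hinv : S⁻¹ * S = 1 := Matrix.nonsing_inv_mul S (by rw [hdet]; exact isUnit_one)
  refine ⟨hsym, hsymp, hdet, ?_⟩
  rw [mul_assoc, hAS, ← mul_assoc, hinv, one_mul]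
end

section
/- Let α > 0, M > 0 and y : [0,∞) → [0,∞) be differentiable with |y'(t)| ≤ M e^{-αt/2} y(t)^{3/2} for all t ≥ 0. If y(0) is small enough that (2M/α)√y(0) < 1, then sup_{t≥0} y(t) ≤ y(0)/(1 - (2M/α)√y(0))² < ∞. -/
/-- Auxiliary: the positive case. -/
lemma diff_ineq_aux (α M : ℝ) (hα : 0 < α) (hM : 0 < M)
    (y y' : ℝ → ℝ) (hy : ∀ t, 0 ≤ t → HasDerivAt y (y' t) t)
    (hypos : ∀ t, 0 ≤ t → 0 < y t)
    (hineq : ∀ t, 0 ≤ t → |y' t| ≤ M * Real.exp (-α * t / 2) * (y t) ^ ((3:ℝ)/2))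
    (hsmall : (2 * M / α) * Real.sqrt (y 0) < 1) :
    ∀ t, 0 ≤ t → y t ≤ y 0 / (1 - (2 * M / α) * Real.sqrt (y 0))^2 := by
  set c : ℝ := 2 * M / α with hc
  have hy0 : 0 < y 0 := hypos 0 le_rfl
  have hs0 : 0 < Real.sqrt (y 0) := Real.sqrt_pos.mpr hy0
  have hcpos : 0 < c := by positivity
  have hden : 0 < 1 - c * Real.sqrt (y 0) := by linarith
  set v : ℝ → ℝ := fun t => (y t) ^ (-(1/2) : ℝ) - (M/α) * Real.exp (-α * t / 2) with hv_def
  set v' : ℝ → ℝ := fun t =>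
      y' t * (-(1/2) : ℝ) * (y t) ^ ((-(1/2) : ℝ) - 1) + (M/2) * Real.exp (-α * t / 2) with hv'_def
  have hv : ∀ t, 0 ≤ t → HasDerivAt v (v' t) t := by
    intro t ht
    have h1 : HasDerivAt (fun t => (y t) ^ (-(1/2) : ℝ))
        (y' t * (-(1/2) : ℝ) * (y t) ^ ((-(1/2) : ℝ) - 1)) t :=
      (hy t ht).rpow_const (Or.inl (hypos t ht).ne')
    have hl : HasDerivAt (fun t : ℝ => -α * t / 2) (-α / 2) t := by
      simpa using ((hasDerivAt_id t).const_mul (-α)).div_const 2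
    have h2 : HasDerivAt (fun t => (M/α) * Real.exp (-α * t / 2))
        ((M/α) * (Real.exp (-α * t / 2) * (-α / 2))) t := (hl.exp).const_mul (M/α)
    have h3 := h1.sub h2
    refine h3.congr_deriv ?_
    show _ = y' t * (-(1/2) : ℝ) * (y t) ^ ((-(1/2) : ℝ) - 1) + (M/2) * Real.exp (-α * t / 2)
    field_simp
    ring
  have hv'nonneg : ∀ t ∈ interior (Set.Ici (0:ℝ)), 0 ≤ deriv v t := by
    intro t ht
    rw [interior_Ici] at ht
    have ht' : (0:ℝ) ≤ t := le_of_lt ht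
    rw [(hv t ht').deriv]
    have hyt : 0 < y t := hypos t ht'
    have hA : 0 < (y t) ^ ((-(1/2) : ℝ) - 1) := Real.rpow_pos_of_pos hyt _
    have hprod : (y t) ^ ((-(1/2) : ℝ) - 1) * (y t) ^ ((3:ℝ)/2) = 1 := by
      rw [← Real.rpow_add hyt]; norm_num
    have habs : (y t) ^ ((-(1/2) : ℝ) - 1) * |y' t|
        ≤ M * Real.exp (-α * t / 2) := by
      calc (y t) ^ ((-(1/2) : ℝ) - 1) * |y' t|
          ≤ (y t) ^ ((-(1/2) : ℝ) - 1) * (M * Real.exp (-α * t / 2) * (y t) ^ ((3:ℝ)/2)) :=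
            mul_le_mul_of_nonneg_left (hineq t ht') hA.le
        _ = M * Real.exp (-α * t / 2) * ((y t) ^ ((-(1/2) : ℝ) - 1) * (y t) ^ ((3:ℝ)/2)) := by ring
        _ = M * Real.exp (-α * t / 2) := by rw [hprod]; ring
    have hub : (y t) ^ ((-(1/2) : ℝ) - 1) * y' t ≤ M * Real.exp (-α * t / 2) := by
      have h1 : (y t) ^ ((-(1/2) : ℝ) - 1) * y' t ≤ (y t) ^ ((-(1/2) : ℝ) - 1) * |y' t| :=
        mul_le_mul_of_nonneg_left (le_abs_self _) hA.le
      linarith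
    show (0:ℝ) ≤ y' t * (-(1/2) : ℝ) * (y t) ^ ((-(1/2) : ℝ) - 1) + (M/2) * Real.exp (-α * t / 2)
    have heq : y' t * (-(1/2) : ℝ) * (y t) ^ ((-(1/2) : ℝ) - 1)
        = -(1/2) * ((y t) ^ ((-(1/2) : ℝ) - 1) * y' t) := by ring
    rw [heq]; linarith
  have hcont : ContinuousOn v (Set.Ici (0:ℝ)) := fun t ht =>
    ((hv t ht).continuousAt).continuousWithinAt
  have hdiff : DifferentiableOn ℝ v (interior (Set.Ici (0:ℝ))) := by
    rw [interior_Ici]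
    exact fun t ht => ((hv t (le_of_lt ht)).differentiableAt).differentiableWithinAt
  have hmono : MonotoneOn v (Set.Ici (0:ℝ)) :=
    monotoneOn_of_deriv_nonneg (convex_Ici 0) hcont hdiff hv'nonneg
  intro t ht
  have hvmono : v 0 ≤ v t := hmono (Set.self_mem_Ici) ht ht
  have hyt : 0 < y t := hypos t ht
  have hexp0 : Real.exp (-α * (0:ℝ) / 2) = 1 := by norm_num
  have hkey : (y 0) ^ (-(1/2) : ℝ) - M/α ≤ (y t) ^ (-(1/2) : ℝ) := by
    have hv0 : v 0 = (y 0) ^ (-(1/2) : ℝ) - M/α := by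
      simp [hv_def, hexp0]
    have hvt : v t = (y t) ^ (-(1/2) : ℝ) - (M/α) * Real.exp (-α * t / 2) := rfl
    rw [hv0, hvt] at hvmono
    have h3 : 0 ≤ M / α * Real.exp (-α * t / 2) := by positivity
    linarith
  have hrw : ∀ x : ℝ, 0 < x → x ^ (-(1/2) : ℝ) = (Real.sqrt x)⁻¹ := by
    intro x hx
    rw [Real.sqrt_eq_rpow, ← Real.rpow_neg hx.le]
  rw [hrw _ hy0, hrw _ hyt] at hkey
  set s := Real.sqrt (y 0) with hs
  set st := Real.sqrt (y t) with hst
  have hstpos : 0 < st := Real.sqrt_pos.mpr hyt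
  have hMα : M / α ≤ c := by
    rw [hc, div_le_div_iff_of_pos_right hα]; nlinarith
  have hd : 0 < s⁻¹ - c := by
    have h1 : s * s⁻¹ = 1 := mul_inv_cancel₀ hs0.ne'
    nlinarith
  have hkey2 : s⁻¹ - c ≤ st⁻¹ := by linarith
  have hst_le : st ≤ (s⁻¹ - c)⁻¹ := by
    have h1 := inv_anti₀ hd hkey2
    rwa [inv_inv] at h1
  have h9 : (s⁻¹ - c)⁻¹ = s / (1 - c * s) := by
    rw [show s⁻¹ - c = (1 - c * s) / s by field_simp, inv_div]
  rw [h9] at hst_le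
  have hyt_eq : y t = st ^ 2 := (Real.sq_sqrt hyt.le).symm
  have hy0_eq : y 0 = s ^ 2 := (Real.sq_sqrt hy0.le).symm
  calc y t = st ^ 2 := hyt_eq
    _ ≤ (s / (1 - c * s)) ^ 2 := by
        apply pow_le_pow_left₀ hstpos.le hst_le
    _ = s ^ 2 / (1 - c * s) ^ 2 := by rw [div_pow]
    _ = y 0 / (1 - c * s) ^ 2 := by rw [hy0_eq]

/-- a nonnegative differentiable function satisfying the differential inequality
`|y'| ≤ M e^{-αt/2} y^{3/2}` with `(2M/α)√y(0) < 1` stays bounded by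
`y(0)/(1 - (2M/α)√y(0))²` for all `t ≥ 0`. -/
theorem differential_inequality_bound (α M : ℝ) (hα : 0 < α) (hM : 0 < M)
    (y y' : ℝ → ℝ) (hy : ∀ t, 0 ≤ t → HasDerivAt y (y' t) t)
    (hynn : ∀ t, 0 ≤ t → 0 ≤ y t)
    (hineq : ∀ t, 0 ≤ t → |y' t| ≤ M * Real.exp (-α * t / 2) * (y t) ^ ((3:ℝ)/2))
    (hsmall : (2 * M / α) * Real.sqrt (y 0) < 1) :
    ∀ t, 0 ≤ t → y t ≤ y 0 / (1 - (2 * M / α) * Real.sqrt (y 0))^2 := by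
  intro t ht
  set c : ℝ := 2 * M / α with hc
  set f : ℝ → ℝ := fun ε => (y 0 + ε) / (1 - c * Real.sqrt (y 0 + ε)) ^ 2 with hf_def
  -- for every small ε > 0, the shifted function y + ε satisfies the positive-case bound
  have hbound : ∀ ε : ℝ, 0 < ε → c * Real.sqrt (y 0 + ε) < 1 → y t ≤ f ε := by
    intro ε hε hεs
    have h := diff_ineq_aux α M hα hM (fun u => y u + ε) y'
      (fun u hu => (hy u hu).add_const ε)
      (fun u hu => by have := hynn u hu; positivity)
      (fun u hu => by
        refine le_trans (hineq u hu) ?_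
        have h1 : (y u) ^ ((3:ℝ)/2) ≤ (y u + ε) ^ ((3:ℝ)/2) :=
          Real.rpow_le_rpow (hynn u hu) (by linarith) (by norm_num)
        have h2 : 0 ≤ M * Real.exp (-α * u / 2) := by positivity
        exact mul_le_mul_of_nonneg_left h1 h2)
      (by simpa using hεs) t ht
    simp only [hf_def]
    rw [hc]
    linarith
  -- the set of good ε is a neighborhood of 0 within (0, ∞)
  have hc_cont : ContinuousAt (fun ε : ℝ => c * Real.sqrt (y 0 + ε)) 0 := by
    fun_prop
  have hsmall' : (fun ε : ℝ => c * Real.sqrt (y 0 + ε)) 0 < 1 := by simpa using hsmall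
  have hev : ∀ᶠ ε in nhdsWithin (0:ℝ) (Set.Ioi 0), y t ≤ f ε := by
    have h1 : ∀ᶠ ε in nhds (0:ℝ), c * Real.sqrt (y 0 + ε) < 1 :=
      hc_cont.eventually_lt_const hsmall'
    filter_upwards [nhdsWithin_le_nhds h1, self_mem_nhdsWithin] with ε h1 h2
    exact hbound ε h2 h1
  -- f is continuous at 0 and f 0 is the desired bound
  have hden : (1 - c * Real.sqrt (y 0)) ≠ 0 := by
    have : c * Real.sqrt (y 0) < 1 := hsmall
    intro h; rw [sub_eq_zero] at h; linarith
  have hf_cont : Filter.Tendsto f (nhdsWithin (0:ℝ) (Set.Ioi 0)) (nhds (f 0)) := by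
    apply Filter.Tendsto.mono_left _ nhdsWithin_le_nhds
    apply ContinuousAt.tendsto
    apply ContinuousAt.div
    · fun_prop
    · fun_prop
    · simpa using pow_ne_zero 2 hden
  have hf0 : f 0 = y 0 / (1 - c * Real.sqrt (y 0)) ^ 2 := by simp [hf_def]
  rw [← hf0]
  exact ge_of_tendsto hf_cont hev
end
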